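/- Conversely, suppose c_0,...,c_n and b_0,...,b_n are nonnegative integers such that Σ_{i=0}^k (-1)^{k-i} c_i ≥ Σ_{i=0}^k (-1)^{k-i} b_i for all 0 ≤ k ≤ n, with equality when k = n. Then there exists a polynomial Q with nonnegative integer coefficients such that Σ_{i=0}^n c_i x^i = Σ_{i=0}^n b_i x^i + (1+x)·Q(x). -/
import Mathlib


open Polynomial Finset

/-- Strong Morse inequalities imply the polynomial (Goresky–MacPherson) form of
the Morse inequalities. -/
theorem stmt2 (n : ℕ) (c b : ℕ → ℕ)
    (hineq : ∀ k ≤ n, ∑ i ∈ range (k+1), (-1 : ℤ)^(k-i) * (b i : ℤ)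
        ≤ ∑ i ∈ range (k+1), (-1 : ℤ)^(k-i) * (c i : ℤ))
    (heq : ∑ i ∈ range (n+1), (-1 : ℤ)^(n-i) * (c i : ℤ)
        = ∑ i ∈ range (n+1), (-1 : ℤ)^(n-i) * (b i : ℤ)) :
    ∃ Q : Polynomial ℤ, (∀ i, 0 ≤ Q.coeff i) ∧
      ∑ i ∈ range (n+1), C (c i : ℤ) * X ^ i
        = ∑ i ∈ range (n+1), C (b i : ℤ) * X ^ i + (1 + X) * Q := by
  set d : ℕ → ℤ := fun i => (c i : ℤ) - (b i : ℤ) with hd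
  set q : ℕ → ℤ := fun k => ∑ i ∈ range (k+1), (-1 : ℤ)^(k-i) * d i with hq
  have hsplit : ∀ k, q k = (∑ i ∈ range (k+1), (-1 : ℤ)^(k-i) * (c i : ℤ))
      - ∑ i ∈ range (k+1), (-1 : ℤ)^(k-i) * (b i : ℤ) := by
    intro k
    rw [hq, ← Finset.sum_sub_distrib]
    exact Finset.sum_congr rfl fun i _ => by simp [hd]; ring
  have hq0 : ∀ k ≤ n, 0 ≤ q k := by
    intro k hk
    rw [hsplit k, sub_nonneg]
    exact hineq k hk
  have hqn : q n = 0 := by rw [hsplit n, sub_eq_zero]; exact heq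
  have hrec : ∀ k, q (k+1) = d (k+1) - q k := by
    intro k
    show (∑ i ∈ range (k+1+1), (-1 : ℤ)^(k+1-i) * d i)
        = d (k+1) - ∑ i ∈ range (k+1), (-1 : ℤ)^(k-i) * d i
    rw [Finset.sum_range_succ]
    have h1 : ∑ i ∈ range (k+1), (-1 : ℤ)^(k+1-i) * d i
        = -∑ i ∈ range (k+1), (-1 : ℤ)^(k-i) * d i := by
      rw [← Finset.sum_neg_distrib]
      refine Finset.sum_congr rfl fun i hi => ?_
      have hik : i ≤ k := Nat.lt_succ_iff.mp (Finset.mem_range.mp hi)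
      rw [Nat.succ_sub hik, pow_succ]
      ring
    rw [h1]
    simp
    ring
  refine ⟨∑ k ∈ range n, C (q k) * X ^ k, ?_, ?_⟩
  · intro i
    rw [Polynomial.finset_sum_coeff]
    refine Finset.sum_nonneg fun k hk => ?_
    rw [Polynomial.coeff_C_mul, Polynomial.coeff_X_pow]
    split_ifs with h
    · simpa using hq0 k ((Finset.mem_range.mp hk).le.trans (Nat.le_refl n))
    · simp
  · set Q : Polynomial ℤ := ∑ k ∈ range n, C (q k) * X ^ k with hQ
    have key : ∑ i ∈ range (n+1), C (d i) * X ^ i = (1 + X) * Q := by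
      have e1 : ∑ i ∈ range (n+1), C (d i) * X ^ i
          = (∑ k ∈ range n, C (d (k+1)) * X ^ (k+1)) + C (d 0) * X ^ 0 :=
        Finset.sum_range_succ' _ n
      have e2 : ∀ k, C (d (k+1)) = C (q (k+1)) + C (q k) := by
        intro k
        rw [← map_add]
        congr 1
        rw [hrec k]; ring
      have e3 : (∑ k ∈ range n, C (q (k+1)) * X ^ (k+1)) + C (q 0) * X ^ 0
          = ∑ i ∈ range (n+1), C (q i) * X ^ i :=
        (Finset.sum_range_succ' (fun i => C (q i) * X ^ i) n).symm
      have e4 : ∑ i ∈ range (n+1), C (q i) * X ^ i = Q := by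
        rw [Finset.sum_range_succ, hqn]
        simp [hQ]
      have e5 : ∑ k ∈ range n, C (q k) * X ^ (k+1) = X * Q := by
        rw [hQ, Finset.mul_sum]
        exact Finset.sum_congr rfl fun k _ => by rw [pow_succ]; ring
      have hd0 : d 0 = q 0 := by simp [hq]
      calc ∑ i ∈ range (n+1), C (d i) * X ^ i
          = (∑ k ∈ range n, C (d (k+1)) * X ^ (k+1)) + C (d 0) * X ^ 0 := e1
        _ = (∑ k ∈ range n, (C (q (k+1)) * X ^ (k+1) + C (q k) * X ^ (k+1)))
              + C (q 0) * X ^ 0 := by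
            rw [hd0]
            refine congrArg (· + C (q 0) * X ^ 0) ?_
            exact Finset.sum_congr rfl fun k _ => by rw [e2 k]; ring
        _ = ((∑ k ∈ range n, C (q (k+1)) * X ^ (k+1)) + C (q 0) * X ^ 0)
              + ∑ k ∈ range n, C (q k) * X ^ (k+1) := by
            rw [Finset.sum_add_distrib]; ring
        _ = Q + X * Q := by rw [e3, e4, e5]
        _ = (1 + X) * Q := by ring
    have hsub : ∑ i ∈ range (n+1), C (d i) * X ^ i
        = (∑ i ∈ range (n+1), C (c i : ℤ) * X ^ i)
          - ∑ i ∈ range (n+1), C (b i : ℤ) * X ^ i := by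
      rw [← Finset.sum_sub_distrib]
      exact Finset.sum_congr rfl fun i _ => by rw [hd, map_sub]; ring
    rw [hsub] at key
    linear_combination key
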